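/- Let a, b, δ be real numbers with 0 ≤ b ≤ a ≤ 1, a + b ≤ 1, and 0 ≤ δ < 1/4, and suppose a + b > 0 or δ > 0. Define p₁ := a(1−3δ) + (1−a)δ and p₋₁ := b(1−3δ) + (1−b)δ. Then: (i) p₁ + p₋₁ = 2δ + (1−4δ)·(a + b); (ii) p₁ + p₋₁ ≥ δ + (1−4δ)²·(a+b)/2; (iii) p₁ − p₋₁ = (a − b)·(1−4δ); (iv) if δ > 0 and δ ≥ ((a+b)/2)·(1−4δ), then p₁/(p₁ + p₋₁) ≥ 1/2 + (a − b)·(1−4δ)/(8δ); (v) if a + b > 0 and δ < ((a+b)/2)·(1−4δ), then p₁/(p₁ + p₋₁) ≥ 1/2 + (a − b)/(4(a + b)). -/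

import Mathlib

theorem ssf_message_probabilities
    (a b δ : ℝ) (hb0 : 0 ≤ b) (hba : b ≤ a) (ha1 : a ≤ 1) (hab : a + b ≤ 1)
    (hδ0 : 0 ≤ δ) (hδ1 : δ < 1 / 4)
    (hpos : 0 < a + b ∨ 0 < δ)
    (p1 pm1 : ℝ)
    (hp1 : p1 = a * (1 - 3 * δ) + (1 - a) * δ)
    (hpm1 : pm1 = b * (1 - 3 * δ) + (1 - b) * δ) :
    p1 + pm1 = 2 * δ + (1 - 4 * δ) * (a + b) ∧
    p1 + pm1 ≥ δ + (1 - 4 * δ) ^ 2 * ((a + b) / 2) ∧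
    p1 - pm1 = (a - b) * (1 - 4 * δ) ∧
    (0 < δ → δ ≥ ((a + b) / 2) * (1 - 4 * δ) →
      p1 / (p1 + pm1) ≥ 1 / 2 + (a - b) * (1 - 4 * δ) / (8 * δ)) ∧
    (0 < a + b → δ < ((a + b) / 2) * (1 - 4 * δ) →
      p1 / (p1 + pm1) ≥ 1 / 2 + (a - b) / (4 * (a + b))) := by
  subst hp1 hpm1
  have h4 : 0 < 1 - 4 * δ := by linarith
  have hab0 : 0 ≤ a + b := by linarith
  refine ⟨by ring, by nlinarith [mul_nonneg h4.le hab0, mul_nonneg (mul_nonneg h4.le hab0) hδ0], by ring, ?_, ?_⟩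
  · intro hδ hge
    have hS : (0:ℝ) < a * (1 - 3 * δ) + (1 - a) * δ + (b * (1 - 3 * δ) + (1 - b) * δ) := by
      nlinarith
    rw [ge_iff_le, ← sub_nonneg, div_sub' hS.ne']
    apply div_nonneg _ hS.le
    have ht : (a - b) * (1 - 4 * δ) / (8 * δ) * (8 * δ) = (a - b) * (1 - 4 * δ) := by
      field_simp
    set t := (a - b) * (1 - 4 * δ) / (8 * δ) with htdef
    have ht0 : 0 ≤ t := div_nonneg (by nlinarith) (by linarith)
    -- S ≤ 4δ
    nlinarith [mul_le_mul_of_nonneg_left hge ht0]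
  · intro hab' hlt
    have hS : (0:ℝ) < a * (1 - 3 * δ) + (1 - a) * δ + (b * (1 - 3 * δ) + (1 - b) * δ) := by
      nlinarith
    rw [ge_iff_le, ← sub_nonneg, div_sub' hS.ne']
    apply div_nonneg _ hS.le
    have ht : (a - b) / (4 * (a + b)) * (4 * (a + b)) = a - b := by
      field_simp
    set t := (a - b) / (4 * (a + b)) with htdef
    have ht0 : 0 ≤ t := div_nonneg (by linarith) (by linarith)
    nlinarith [mul_le_mul_of_nonneg_left hlt.le ht0]
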